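/- Let P be a convex polygon with vertices labeled counterclockwise, d_i the vector from vertex i−1 to vertex i+1, and A_i the (positive) area of the triangle formed by vertices i−1, i, i+1. If the origin is in the interior of P, then n + Σ_{i=1}^n (1/A_i)·det[(x_{i−1}, x_{i+1}); (y_{i−1}, y_{i+1})] > 0, where (x_j, y_j) are the coordinates of vertex j. -/

import Mathlib

/-!
STATEMENT 3. For a convex polygon with counterclockwise vertices
`p i = (x i, y i)` containing the origin in its interior,
`n + ∑ i (1 / A i) · (x_{i-1} y_{i+1} − x_{i+1} y_{i-1}) > 0`,
where `A i` is the area of the triangle with vertices `i − 1, i, i + 1`.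
-/

/-- Planar cross product. -/
def cross2 (a b : ℝ × ℝ) : ℝ := a.1 * b.2 - a.2 * b.1

/-- `p` is a strictly convex polygon with vertices labeled counterclockwise. -/
def ConvexCCW {n : ℕ} [NeZero n] (p : Fin n → ℝ × ℝ) : Prop :=
  ∀ i j : Fin n, j ≠ i → j ≠ i + 1 → 0 < cross2 (p (i + 1) - p i) (p j - p i)

/-- Twice the signed area of the triangle `a b c`. -/
def tri (a b c : ℝ × ℝ) : ℝ := cross2 (b - a) (c - a)

lemma tri_rot (a b c : ℝ × ℝ) : tri a b c = tri b c a := by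
  simp only [tri, cross2, Prod.fst_sub, Prod.snd_sub]; ring

lemma tri_swap (a b c : ℝ × ℝ) : tri a b c = - tri a c b := by
  simp only [tri, cross2, Prod.fst_sub, Prod.snd_sub]; ring

lemma tri_self₁ (a b : ℝ × ℝ) : tri a b a = 0 := by
  simp only [tri, cross2, Prod.fst_sub, Prod.snd_sub]; ring

lemma tri_self₂ (a b : ℝ × ℝ) : tri a b b = 0 := by
  simp only [tri, cross2, Prod.fst_sub, Prod.snd_sub]; ring

lemma tri_zero₁ (a b : ℝ × ℝ) : tri a b (0, 0) = cross2 a b := by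
  simp only [tri, cross2, Prod.fst_sub, Prod.snd_sub]; ring

lemma tri_zero₂ (a b : ℝ × ℝ) : tri (0, 0) a b = cross2 a b := by
  simp only [tri, cross2, Prod.fst_sub, Prod.snd_sub]; ring

lemma tri_zero₃ (a b : ℝ × ℝ) : tri a (0, 0) b = - cross2 a b := by
  simp only [tri, cross2, Prod.fst_sub, Prod.snd_sub]; ring

/-- The master identity: barycentric expansion of an affine functional. -/
lemma tri_master (a b c q r s : ℝ × ℝ) :
    tri a b c * tri r s q =
      tri q b c * tri r s a + tri a q c * tri r s b + tri a b q * tri r s c := by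
  simp only [tri, cross2, Prod.fst_sub, Prod.snd_sub]; ring

lemma tri_eq_edge (a b c : ℝ × ℝ) : cross2 (b - a) (c - b) = tri a b c := by
  simp only [tri, cross2, Prod.fst_sub, Prod.snd_sub]; ring

lemma chi_identity (a b c : ℝ × ℝ) :
    cross2 a c = cross2 a b + cross2 b c - tri a b c := by
  simp only [tri, cross2, Prod.fst_sub, Prod.snd_sub]; ring

lemma tri_sum (a b c : ℝ × ℝ) :
    tri a b c = cross2 a b + cross2 b c + cross2 c a := by
  simp only [tri, cross2, Prod.fst_sub, Prod.snd_sub]; ring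

theorem glick_infinity_coefficient_positive
    {n : ℕ} [NeZero n] (hn : 3 ≤ n)
    (p : Fin n → ℝ × ℝ) (hconv : ConvexCCW p)
    -- the origin lies in the interior of `P`
    (hO : ∀ i, 0 < cross2 (p (i + 1) - p i) ((0, 0) - p i))
    -- `A i` is the area of the triangle with vertices `i-1`, `i`, `i+1`
    (A : Fin n → ℝ)
    (hA : ∀ i, A i = cross2 (p i - p (i - 1)) (p (i + 1) - p i) / 2) :
    0 < (n : ℝ) + ∑ i : Fin n,
      ((p (i - 1)).1 * (p (i + 1)).2 - (p (i + 1)).1 * (p (i - 1)).2) / A i := by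
  classical
  -- Fin n arithmetic facts
  have e1 : ∀ i : Fin n, i - 1 + 1 = i := fun i => sub_add_cancel i 1
  have e2 : ∀ i : Fin n, i + 1 - 1 = i := fun i => add_sub_cancel_right i 1
  open Fin.NatCast in
  have hone : (1 : Fin n) ≠ 0 := by
    have : ((1:ℕ) : Fin n) ≠ 0 := by
      rw [Ne, Fin.natCast_eq_zero]
      intro h; have := Nat.le_of_dvd one_pos h; omega
    simpa using this
  open Fin.NatCast in
  have htwo : (2 : Fin n) ≠ 0 := by
    have : ((2:ℕ) : Fin n) ≠ 0 := by
      rw [Ne, Fin.natCast_eq_zero]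
      intro h; have := Nat.le_of_dvd two_pos h; omega
    simpa using this
  have hkey : ∀ i c : Fin n, i + c = i → c = 0 := by
    intro i c h
    have : i + c = i + 0 := by simpa using h
    exact add_left_cancel this
  have ne_p1 : ∀ i : Fin n, i + 1 ≠ i := fun i h => hone (hkey i 1 h)
  have ne_m1 : ∀ i : Fin n, i - 1 ≠ i := by
    intro i h
    apply ne_p1 i
    conv_lhs => rw [← h, e1]
  have ne_p1_m1 : ∀ i : Fin n, i + 1 ≠ i - 1 := by
    intro i h
    apply htwo
    have h2 : i + 1 + 1 = i := by rw [h, e1]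
    have : i + (1 + 1) = i := by rwa [← add_assoc]
    have := hkey i (1+1) this
    open Fin.CommRing in
    simpa [one_add_one_eq_two] using this
  -- basic positivity
  have htri : ∀ i : Fin n, 0 < tri (p (i-1)) (p i) (p (i+1)) := by
    intro i
    have h := hconv (i-1) (i+1) (ne_p1_m1 i) (by rw [e1]; exact ne_p1 i)
    rw [e1] at h
    exact h
  have h2A : ∀ i : Fin n, 2 * A i = tri (p (i-1)) (p i) (p (i+1)) := by
    intro i
    rw [hA i, ← tri_eq_edge]
    ring
  have hApos : ∀ i : Fin n, 0 < A i := by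
    intro i; have := htri i; have := h2A i; linarith
  have hu : ∀ i : Fin n, 0 < cross2 (p (i-1)) (p i) := by
    intro i
    have h := hO (i-1)
    rw [e1] at h
    have : cross2 (p i - p (i-1)) ((0,0) - p (i-1)) = cross2 (p (i-1)) (p i) := by
      simp only [cross2, Prod.fst_sub, Prod.snd_sub]; ring
    rwa [this] at h
  have hu' : ∀ i : Fin n, 0 < cross2 (p i) (p (i+1)) := by
    intro i; have := hu (i+1); rwa [e2] at this
  -- Side lemma: every vertex other than `p i` is weakly left of the chord
  -- from `p (i-1)` to `p (i+1)`.
  have L1 : ∀ i m : Fin n, m ≠ i → 0 ≤ tri (p (i-1)) (p (i+1)) (p m) := by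
    intro i m him
    by_cases h1 : m = i - 1
    · rw [h1, tri_self₁]
    by_cases h2 : m = i + 1
    · rw [h2, tri_self₂]
    by_contra hneg
    push_neg at hneg
    have w1 : 0 < tri (p m) (p i) (p (i+1)) := by
      have h := hconv i m him h2
      rw [tri_rot]; exact h
    have w2 : 0 < tri (p (i-1)) (p m) (p (i+1)) := by
      rw [tri_swap]; linarith
    have w3 : 0 < tri (p (i-1)) (p i) (p m) := by
      have h := hconv (i-1) m h1 (by rw [e1]; exact him)
      rw [e1] at h; exact h
    have x1 : 0 ≤ tri (p m) (p (m+1)) (p (i-1)) := by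
      by_cases hc : i - 1 = m + 1
      · rw [hc, tri_self₂]
      · exact le_of_lt (hconv m (i-1) (Ne.symm h1) hc)
    have x2 : 0 < tri (p m) (p (m+1)) (p i) := by
      refine hconv m i (Ne.symm him) ?_
      intro h; apply h1; rw [h, e2]
    have x3 : 0 < tri (p m) (p (m+1)) (p (i+1)) := by
      refine hconv m (i+1) (Ne.symm h2) ?_
      intro h; exact him (add_right_cancel h).symm
    have hM := tri_master (p (i-1)) (p i) (p (i+1)) (p m) (p m) (p (m+1))
    rw [tri_self₁, mul_zero] at hM
    nlinarith [mul_nonneg w1.le x1, mul_pos w2 x2, mul_pos w3 x3]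
  -- two non-neighboring "bad ears" are impossible
  have Need1 : ∀ i j : Fin n, cross2 (p (i-1)) (p (i+1)) < 0 →
      cross2 (p (j-1)) (p (j+1)) < 0 →
      j ≠ i → j ≠ i - 1 → j ≠ i + 1 → False := by
    intro i j hχi hχj hij hijm hijp
    have hM := tri_master (p (j-1)) (p j) (p (j+1)) ((0,0) : ℝ × ℝ)
      (p (i-1)) (p (i+1))
    simp only [tri_zero₁, tri_zero₂, tri_zero₃] at hM
    have La : 0 ≤ tri (p (i-1)) (p (i+1)) (p (j-1)) := by
      refine L1 i (j-1) ?_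
      intro h; apply hijp; rw [← h, e1]
    have Lb : 0 ≤ tri (p (i-1)) (p (i+1)) (p j) := L1 i j hij
    have Lc : 0 ≤ tri (p (i-1)) (p (i+1)) (p (j+1)) := by
      refine L1 i (j+1) ?_
      intro h; apply hijm; rw [← h, e2]
    have w1 : 0 < cross2 (p j) (p (j+1)) := hu' j
    have w2 : 0 < - cross2 (p (j-1)) (p (j+1)) := by linarith
    have w3 : 0 < cross2 (p (j-1)) (p j) := hu j
    have hT : 0 < tri (p (j-1)) (p j) (p (j+1)) := htri j
    nlinarith [mul_nonneg w1.le La, mul_nonneg w2.le Lb, mul_nonneg w3.le Lc,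
      mul_pos hT (neg_pos.mpr hχi)]
  -- goal reduction
  have sumeq : ∀ i : Fin n,
      ((p (i - 1)).1 * (p (i + 1)).2 - (p (i + 1)).1 * (p (i - 1)).2) / A i
        = (cross2 (p (i-1)) (p i) + cross2 (p i) (p (i+1))) / A i - 2 := by
    intro i
    have hAi := hApos i
    have hnum : (p (i - 1)).1 * (p (i + 1)).2 - (p (i + 1)).1 * (p (i - 1)).2
        = cross2 (p (i-1)) (p (i+1)) := by
      simp only [cross2]; ring
    have hident : cross2 (p (i-1)) (p (i+1))
        = cross2 (p (i-1)) (p i) + cross2 (p i) (p (i+1)) - 2 * A i := by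
      rw [h2A]; exact chi_identity _ _ _
    rw [hnum, hident, sub_div, mul_div_assoc, div_self (ne_of_gt hAi), mul_one]
  rw [Finset.sum_congr rfl (fun i _ => sumeq i), Finset.sum_sub_distrib,
    Finset.sum_const, Finset.card_univ, Fintype.card_fin, nsmul_eq_mul]
  set F : Fin n → ℝ := fun i =>
    (cross2 (p (i-1)) (p i) + cross2 (p i) (p (i+1))) / A i with hF
  suffices hS : (n : ℝ) < ∑ i : Fin n, F i by linarith
  have hFpos : ∀ i, 0 < F i := fun i =>
    div_pos (by have := hu i; have := hu' i; linarith) (hApos i)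
  have hFgood : ∀ i : Fin n, 0 ≤ cross2 (p (i-1)) (p (i+1)) → 2 ≤ F i := by
    intro i hχ
    have hAi := hApos i
    have hident : cross2 (p (i-1)) (p (i+1))
        = cross2 (p (i-1)) (p i) + cross2 (p i) (p (i+1)) - 2 * A i := by
      rw [h2A]; exact chi_identity _ _ _
    rw [hF]
    rw [le_div_iff₀ hAi]
    linarith
  by_cases hn3 : n = 3
  · -- the triangle case
    subst hn3
    rw [Fin.sum_univ_three]
    have i0m : (0 : Fin 3) - 1 = 2 := rfl
    have i0p : (0 : Fin 3) + 1 = 1 := rfl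
    have i1m : (1 : Fin 3) - 1 = 0 := rfl
    have i1p : (1 : Fin 3) + 1 = 2 := rfl
    have i2m : (2 : Fin 3) - 1 = 1 := rfl
    have i2p : (2 : Fin 3) + 1 = 0 := rfl
    have hA0 := h2A 0; have hA1 := h2A 1; have hA2 := h2A 2
    rw [i0m, i0p] at hA0
    rw [i1m, i1p] at hA1
    rw [i2m, i2p] at hA2
    have hrot1 : tri (p 2) (p 0) (p 1) = tri (p 0) (p 1) (p 2) := by
      rw [tri_rot]
    have hrot2 : tri (p 1) (p 2) (p 0) = tri (p 0) (p 1) (p 2) := by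
      rw [← tri_rot]
    have hAe0 : A 0 = A 1 := by rw [hrot1] at hA0; linarith
    have hAe2 : A 2 = A 1 := by rw [hrot2] at hA2; linarith
    have hsum3 : tri (p 0) (p 1) (p 2)
        = cross2 (p 0) (p 1) + cross2 (p 1) (p 2) + cross2 (p 2) (p 0) :=
      tri_sum _ _ _
    have hA1pos := hApos 1
    have hF0 : F 0 = (cross2 (p 2) (p 0) + cross2 (p 0) (p 1)) / A 1 := by
      rw [hF]; simp only [i0m, i0p, hAe0]
    have hF1 : F 1 = (cross2 (p 0) (p 1) + cross2 (p 1) (p 2)) / A 1 := by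
      rw [hF]; simp only [i1m, i1p]
    have hF2 : F 2 = (cross2 (p 1) (p 2) + cross2 (p 2) (p 0)) / A 1 := by
      rw [hF]; simp only [i2m, i2p, hAe2]
    rw [hF0, hF1, hF2, ← add_div, ← add_div]
    have hnum : cross2 (p 2) (p 0) + cross2 (p 0) (p 1)
        + (cross2 (p 0) (p 1) + cross2 (p 1) (p 2))
        + (cross2 (p 1) (p 2) + cross2 (p 2) (p 0)) = 4 * A 1 := by
      linarith
    rw [hnum, mul_div_assoc, div_self (ne_of_gt hA1pos), mul_one]
    norm_num
  · -- n ≥ 4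
    have hn4 : 4 ≤ n := by omega
    open Fin.NatCast in
    have hthree : (3 : Fin n) ≠ 0 := by
      have : ((3:ℕ) : Fin n) ≠ 0 := by
        rw [Ne, Fin.natCast_eq_zero]
        intro h; have := Nat.le_of_dvd (by norm_num) h; omega
      simpa using this
    have ne_p2_m1 : ∀ i : Fin n, i + 1 + 1 ≠ i - 1 := by
      intro i h
      apply hthree
      have h2 : i + 1 + 1 + 1 = i := by rw [h, e1]
      have h3 : i + 3 = i := by
        have hx : i + 1 + 1 + 1 = i + 3 := by open Fin.CommRing in ring
        rw [← hx]; exact h2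
      exact hkey i 3 h3
    have Need2 : ∀ i : Fin n, cross2 (p (i-1-1)) (p (i-1+1)) < 0 →
        cross2 (p (i+1-1)) (p (i+1+1)) < 0 → False := by
      intro i hm hp
      rw [e1] at hm
      rw [e2] at hp
      have hM := tri_master (p i) (p (i+1)) (p (i+1+1)) ((0,0) : ℝ × ℝ)
        (p (i-1-1)) (p i)
      simp only [tri_zero₁, tri_zero₂, tri_zero₃] at hM
      rw [tri_self₂, mul_zero] at hM
      -- L-values
      have Lb : 0 ≤ tri (p (i-1-1)) (p i) (p (i+1)) := by
        have h := L1 (i-1) (i+1) (ne_p1_m1 i)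
        rwa [e1] at h
      have Lc : 0 ≤ tri (p (i-1-1)) (p i) (p (i+1+1)) := by
        have h := L1 (i-1) (i+1+1) (ne_p2_m1 i)
        rwa [e1] at h
      have w2 : 0 < - cross2 (p i) (p (i+1+1)) := by linarith
      have w3 : 0 < cross2 (p i) (p (i+1)) := hu' i
      have hT : 0 < tri (p i) (p (i+1)) (p (i+1+1)) := by
        have h := htri (i+1)
        rwa [e2] at h
      nlinarith [mul_nonneg w2.le Lb, mul_nonneg w3.le Lc,
        mul_pos hT (neg_pos.mpr hm)]
    -- counting bad ears
    set Bd : Finset (Fin n) :=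
      Finset.univ.filter (fun i => cross2 (p (i-1)) (p (i+1)) < 0) with hBd
    have hmem : ∀ j : Fin n, j ∈ Bd ↔ cross2 (p (j-1)) (p (j+1)) < 0 := by
      intro j; rw [hBd]; simp
    have hcard : Bd.card ≤ 2 := by
      rcases Finset.eq_empty_or_nonempty Bd with he | ⟨i₀, hi₀⟩
      · rw [he]; simp
      · have hi₀' := (hmem i₀).1 hi₀
        have hbad : ∀ j ∈ Bd, j = i₀ ∨ j = i₀ - 1 ∨ j = i₀ + 1 := by
          intro j hj
          by_contra hcon
          push_neg at hcon
          exact Need1 i₀ j hi₀' ((hmem j).1 hj) hcon.1 hcon.2.1 hcon.2.2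
        have hnotboth : ¬ (i₀ - 1 ∈ Bd ∧ i₀ + 1 ∈ Bd) := by
          rintro ⟨ha, hb⟩
          exact Need2 i₀ ((hmem _).1 ha) ((hmem _).1 hb)
        by_cases hm : i₀ - 1 ∈ Bd
        · have hp : i₀ + 1 ∉ Bd := fun h => hnotboth ⟨hm, h⟩
          have hsub : Bd ⊆ {i₀ - 1, i₀} := by
            intro j hj
            rcases hbad j hj with h | h | h
            · simp [h]
            · simp [h]
            · exact absurd (h ▸ hj) hp
          calc Bd.card ≤ ({i₀ - 1, i₀} : Finset (Fin n)).card :=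
                Finset.card_le_card hsub
            _ ≤ 2 := by
                apply le_trans (Finset.card_insert_le _ _)
                simp
        · have hsub : Bd ⊆ {i₀, i₀ + 1} := by
            intro j hj
            rcases hbad j hj with h | h | h
            · simp [h]
            · exact absurd (h ▸ hj) hm
            · simp [h]
          calc Bd.card ≤ ({i₀, i₀ + 1} : Finset (Fin n)).card :=
                Finset.card_le_card hsub
            _ ≤ 2 := by
                apply le_trans (Finset.card_insert_le _ _)
                simp
    -- sum estimate
    have hsplit := Finset.sum_filter_add_sum_filter_not Finset.univ
      (fun i => cross2 (p (i-1)) (p (i+1)) < 0) F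
    have hgoodsum : 2 * ((Finset.univ.filter
        (fun i : Fin n => ¬ cross2 (p (i-1)) (p (i+1)) < 0)).card : ℝ)
        ≤ ∑ i ∈ Finset.univ.filter
            (fun i : Fin n => ¬ cross2 (p (i-1)) (p (i+1)) < 0), F i := by
      have h := Finset.card_nsmul_le_sum
        (Finset.univ.filter (fun i : Fin n => ¬ cross2 (p (i-1)) (p (i+1)) < 0))
        F 2 (by
          intro x hx
          simp only [Finset.mem_filter] at hx
          exact hFgood x (not_lt.mp hx.2))
      rw [nsmul_eq_mul] at h
      calc (2:ℝ) * _ = _ * 2 := by ring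
        _ ≤ _ := h
    have hcards : Bd.card + (Finset.univ.filter
        (fun i : Fin n => ¬ cross2 (p (i-1)) (p (i+1)) < 0)).card = n := by
      rw [hBd]
      rw [Finset.card_filter_add_card_filter_not]
      simp
    rcases Finset.eq_empty_or_nonempty Bd with he | hne
    · have hc0 : Bd.card = 0 := by rw [he]; simp
      have hcn' : (Finset.univ.filter
          (fun i : Fin n => ¬ cross2 (p (i-1)) (p (i+1)) < 0)).card = n := by
        omega
      have hcn : ((Finset.univ.filter
          (fun i : Fin n => ¬ cross2 (p (i-1)) (p (i+1)) < 0)).card : ℝ) = n := by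
        rw [hcn']
      have hbadsum : (0:ℝ) ≤ ∑ i ∈ Bd, F i := by
        rw [he]; simp
      have hBdsum : ∑ i ∈ Finset.univ.filter
          (fun i : Fin n => cross2 (p (i-1)) (p (i+1)) < 0), F i
          = ∑ i ∈ Bd, F i := by rw [hBd]
      rw [← hsplit, hBdsum]
      rw [hcn] at hgoodsum
      have : (0:ℝ) < n := by positivity
      nlinarith
    · have hbadsum : (0:ℝ) < ∑ i ∈ Bd, F i :=
        Finset.sum_pos (fun i _ => hFpos i) hne
      have hBdsum : ∑ i ∈ Finset.univ.filter
          (fun i : Fin n => cross2 (p (i-1)) (p (i+1)) < 0), F i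
          = ∑ i ∈ Bd, F i := by rw [hBd]
      rw [← hsplit, hBdsum]
      have hbig : (n : ℝ) ≤ 2 * ((Finset.univ.filter
          (fun i : Fin n => ¬ cross2 (p (i-1)) (p (i+1)) < 0)).card : ℝ) := by
        have : n ≤ 2 * (Finset.univ.filter
            (fun i : Fin n => ¬ cross2 (p (i-1)) (p (i+1)) < 0)).card := by omega
        exact_mod_cast this
      linarith
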